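/- Let c > 0 and R₀ > 0, and let y be a C¹ solution on (0, R₀] of y'(r) = h^{-4/3}(y(r)² - c) satisfying y(R₀) ≥ 0, where h ∈ (0,1]. Then y(r) ≥ √c · tanh(h^{-4/3}√c(R₀ - r)) for all r ∈ (0, R₀]; in particular y(r) ≥ √c tanh(√c/2) for r ∈ (0, R₀/2] when R₀ ≥ 1 and h ≤ 1. -/

import Mathlib

open Real Set

lemma tanh_hasDerivAt' (x : ℝ) : HasDerivAt Real.tanh (1 - Real.tanh x ^ 2) x := by
  have hc : Real.cosh x ≠ 0 := (Real.cosh_pos x).ne'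
  have h := (Real.hasDerivAt_sinh x).div (Real.hasDerivAt_cosh x) hc
  have he : Real.tanh = fun x => Real.sinh x / Real.cosh x :=
    funext fun x => Real.tanh_eq_sinh_div_cosh x
  rw [he]
  refine h.congr_deriv ?_
  field_simp

lemma tanh_strictMono' : StrictMono Real.tanh := by
  apply strictMono_of_deriv_pos
  intro x
  rw [(tanh_hasDerivAt' x).deriv]
  have hc : Real.cosh x ≠ 0 := (Real.cosh_pos x).ne'
  have : 1 - Real.tanh x ^ 2 = 1 / Real.cosh x ^ 2 := by
    rw [Real.tanh_eq_sinh_div_cosh]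
    field_simp
    linarith [Real.cosh_sq_sub_sinh_sq x]
  rw [this]
  positivity

theorem stmt_10 (c R₀ h : ℝ) (hc : 0 < c) (hR₀ : 0 < R₀) (hh : 0 < h) (hh1 : h ≤ 1)
    (y : ℝ → ℝ) (hy : ContDiffOn ℝ 1 y (Set.Ioc 0 R₀))
    (hode : ∀ r ∈ Set.Ioc (0 : ℝ) R₀,
      HasDerivWithinAt y (h ^ (-(4 : ℝ) / 3) * ((y r) ^ 2 - c)) (Set.Ioc 0 R₀) r)
    (hinit : 0 ≤ y R₀) :
    (∀ r ∈ Set.Ioc (0 : ℝ) R₀,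
        Real.sqrt c * Real.tanh (h ^ (-(4 : ℝ) / 3) * Real.sqrt c * (R₀ - r)) ≤ y r) ∧
    (1 ≤ R₀ → ∀ r ∈ Set.Ioc (0 : ℝ) (R₀ / 2),
        Real.sqrt c * Real.tanh (Real.sqrt c / 2) ≤ y r) := by
  set K : ℝ := h ^ (-(4 : ℝ) / 3) with hKdef
  have hK : 0 < K := Real.rpow_pos_of_pos hh _
  have hK1 : 1 ≤ K :=
    Real.one_le_rpow_of_pos_of_le_one_of_nonpos hh hh1 (by norm_num)
  set s : ℝ := Real.sqrt c with hsdef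
  have hs : 0 < s := Real.sqrt_pos.2 hc
  have hs2 : s ^ 2 = c := Real.sq_sqrt hc.le
  set z : ℝ → ℝ := fun r => s * Real.tanh (K * s * (R₀ - r)) with hzdef
  have hzR : z R₀ = 0 := by simp [hzdef]
  have hzderiv : ∀ r : ℝ, HasDerivAt z (K * (z r ^ 2 - c)) r := by
    intro r
    have h1 : HasDerivAt (fun r : ℝ => K * s * (R₀ - r)) (-(K * s)) r := by
      simpa using ((hasDerivAt_const r R₀).sub (hasDerivAt_id r)).const_mul (K * s)
    have h2 := ((tanh_hasDerivAt' (K * s * (R₀ - r))).comp r h1).const_mul s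
    refine h2.congr_deriv ?_
    show s * ((1 - Real.tanh (K * s * (R₀ - r)) ^ 2) * -(K * s)) = K * ((s * Real.tanh (K * s * (R₀ - r))) ^ 2 - c)
    rw [← hs2]
    ring
  have htanhc : Continuous Real.tanh :=
    continuous_iff_continuousAt.2 fun x => (tanh_hasDerivAt' x).continuousAt
  have hzcont : Continuous z := by
    apply continuous_const.mul
    exact htanhc.comp (by fun_prop)
  -- main comparison
  have main : ∀ r ∈ Set.Ioc (0 : ℝ) R₀, z r ≤ y r := by
    intro r₀ hr₀
    rcases eq_or_lt_of_le hr₀.2 with heq | hlt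
    · rw [heq, hzR]; exact hinit
    · -- clamp
      have hIccsub : Set.Icc r₀ R₀ ⊆ Set.Ioc 0 R₀ := fun x hx =>
        ⟨lt_of_lt_of_le hr₀.1 hx.1, hx.2⟩
      have hclamp : Continuous fun r : ℝ => min (max r r₀) R₀ :=
        (continuous_id.max continuous_const).min continuous_const
      have hmem : ∀ r : ℝ, min (max r r₀) R₀ ∈ Set.Ioc 0 R₀ := by
        intro r
        refine ⟨lt_min (lt_of_lt_of_le hr₀.1 (le_max_right r r₀)) hR₀, min_le_right _ _⟩
      have hclampeq : ∀ x ∈ Set.Icc r₀ R₀, min (max x r₀) R₀ = x := by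
        intro x hx
        rw [max_eq_left hx.1, min_eq_left hx.2]
      set g : ℝ → ℝ := fun r => K * (y (min (max r r₀) R₀) + z r) with hgdef
      have hgcont : Continuous g := by
        apply continuous_const.mul
        exact (hy.continuousOn.comp_continuous hclamp hmem).add hzcont
      set G : ℝ → ℝ := fun r => ∫ t in r₀..r, g t with hGdef
      have hGderiv : ∀ r : ℝ, HasDerivAt G (g r) r := by
        intro r
        exact intervalIntegral.integral_hasDerivAt_right
          (hgcont.intervalIntegrable _ _)
          (hgcont.stronglyMeasurable.stronglyMeasurableAtFilter)
          hgcont.continuousAt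
      set F : ℝ → ℝ := fun r => (y r - z r) * Real.exp (-(G r)) with hFdef
      have hFcont : ContinuousOn F (Set.Icc r₀ R₀) := by
        apply ContinuousOn.mul
        · exact ((hy.continuousOn.mono hIccsub).sub hzcont.continuousOn)
        · exact (Real.continuous_exp.comp
            (continuous_iff_continuousAt.2 fun x => (hGderiv x).continuousAt).neg).continuousOn
      have hFderiv : ∀ x ∈ Set.Ioo r₀ R₀, HasDerivAt F 0 x := by
        intro x hx
        have hxIoc : x ∈ Set.Ioc 0 R₀ := hIccsub ⟨hx.1.le, hx.2.le⟩
        have hnhds : Set.Ioc 0 R₀ ∈ nhds x := Ioc_mem_nhds hxIoc.1 hx.2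
        have hyd : HasDerivAt y (K * (y x ^ 2 - c)) x :=
          (hode x hxIoc).hasDerivAt hnhds
        have hζ := hyd.sub (hzderiv x)
        have hexp : HasDerivAt (fun r => Real.exp (-(G r)))
            (Real.exp (-(G x)) * -(g x)) x := ((hGderiv x).neg).exp
        have hF := hζ.mul hexp
        have hgx : g x = K * (y x + z x) := by
          simp only [hgdef]
          rw [hclampeq x ⟨hx.1.le, hx.2.le⟩]
        have : (K * (y x ^ 2 - c) - K * (z x ^ 2 - c)) * Real.exp (-(G x)) +
            (y x - z x) * (Real.exp (-(G x)) * -(g x)) = 0 := by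
          rw [hgx]; ring
        rw [← this]
        exact hF
      obtain ⟨ξ, hξ, hslope⟩ :=
        exists_hasDerivAt_eq_slope F (fun _ => (0 : ℝ)) hlt hFcont hFderiv
      have hFeq : F R₀ = F r₀ := by
        have hne : R₀ - r₀ ≠ 0 := sub_ne_zero.2 hlt.ne'
        field_simp at hslope
        linarith [hslope]
      have hGr₀ : G r₀ = 0 := intervalIntegral.integral_same
      have hFr₀ : F r₀ = y r₀ - z r₀ := by
        simp [hFdef, hGr₀]
      have hFR₀ : 0 ≤ F R₀ := by
        simp only [hFdef, hzR, sub_zero]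
        exact mul_nonneg hinit (Real.exp_pos _).le
      linarith [hFeq ▸ hFR₀, hFr₀ ▸ (hFeq ▸ hFR₀)]
  refine ⟨main, ?_⟩
  intro hR1 r hr
  have hrIoc : r ∈ Set.Ioc (0 : ℝ) R₀ :=
    ⟨hr.1, hr.2.trans (by linarith)⟩
  refine le_trans ?_ (main r hrIoc)
  have harg : s / 2 ≤ K * s * (R₀ - r) := by
    have h1 : (1 : ℝ) / 2 ≤ R₀ - r := by
      have := hr.2; linarith
    have h2 : s ≤ K * s := le_mul_of_one_le_left hs.le hK1
    have h3 : s * (1 / 2) ≤ K * s * (R₀ - r) :=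
      mul_le_mul h2 h1 (by norm_num) (by positivity)
    linarith
  exact mul_le_mul_of_nonneg_left (tanh_strictMono'.monotone harg) hs.le
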